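/- Consider the system with α₁ = α₂. Then the transition map through the chart satisfies: a solution starting at (a, r, ε) = (a*, δ, ε*) with 0 < ε* ≤ μ of the system a' = -2a + εa, r' = -rε, ε' = 2ε² reaches ε = μ at a point whose a-coordinate has absolute value at most |a*|·exp(-2T)·(μ/ε*)^{1/2}, where T = (1/2)(1/ε* - 1/μ). -/

import Mathlib

/-- For a' = -2a + εa, r' = -rε, ε' = 2ε², a solution starting at (a*, δ, ε*) with
0 < ε* ≤ μ reaching ε = μ at time T' has
|a(T')| ≤ |a*|·exp(-2T)·(μ/ε*)^{1/2}, with T = (1/2)(1/ε* - 1/μ). -/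
theorem stmt_15 (a r ε : ℝ → ℝ) (astar δ εstar μ T' : ℝ)
    (hδ : 0 < δ) (h0 : 0 < εstar) (hμ : εstar ≤ μ) (hT' : 0 ≤ T')
    (ha : ∀ t ∈ Set.Icc 0 T', HasDerivAt a (-2 * a t + ε t * a t) t)
    (hr : ∀ t ∈ Set.Icc 0 T', HasDerivAt r (-(r t) * ε t) t)
    (hε : ∀ t ∈ Set.Icc 0 T', HasDerivAt ε (2 * (ε t) ^ 2) t)
    (ha0 : a 0 = astar) (hr0 : r 0 = δ) (hε0 : ε 0 = εstar) (hεT : ε T' = μ) :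
    |a T'| ≤ |astar| * Real.exp (-2 * ((1 / 2) * (1 / εstar - 1 / μ))) *
      Real.sqrt (μ / εstar) := by
  have hmem0 : (0 : ℝ) ∈ Set.Icc 0 T' := ⟨le_refl _, hT'⟩
  have hmemT : T' ∈ Set.Icc 0 T' := ⟨hT', le_refl _⟩
  -- ε is positive on [0, T']
  have hεcont : ContinuousOn ε (Set.Icc 0 T') := fun t ht =>
    (hε t ht).continuousAt.continuousWithinAt
  have hεmono : MonotoneOn ε (Set.Icc 0 T') := by
    apply monotoneOn_of_deriv_nonneg (convex_Icc 0 T') hεcont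
    · intro t ht
      rw [interior_Icc] at ht
      exact (hε t (Set.Ioo_subset_Icc_self ht)).differentiableAt.differentiableWithinAt
    · intro t ht
      rw [interior_Icc] at ht
      rw [(hε t (Set.Ioo_subset_Icc_self ht)).deriv]
      positivity
  have hεpos : ∀ t ∈ Set.Icc 0 T', 0 < ε t := by
    intro t ht
    have := hεmono hmem0 ht ht.1
    rw [hε0] at this
    linarith
  -- 1/ε(t) + 2t is constant
  have hF : ∀ x ∈ Set.Icc 0 T', (fun t => (ε t)⁻¹ + 2 * t) x
      = (fun t => (ε t)⁻¹ + 2 * t) 0 := by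
    apply constant_of_has_deriv_right_zero
    · intro t ht
      exact (((hε t ht).inv (hεpos t ht).ne').add
        ((hasDerivAt_id t).const_mul 2)).continuousAt.continuousWithinAt
    · intro t ht
      have ht' : t ∈ Set.Icc 0 T' := Set.Ico_subset_Icc_self ht
      have h1 : HasDerivAt (fun t => (ε t)⁻¹ + 2 * t)
          (-(2 * ε t ^ 2) / ε t ^ 2 + 2 * 1) t :=
        ((hε t ht').inv (hεpos t ht').ne').add ((hasDerivAt_id t).const_mul 2)
      have hne := (hεpos t ht').ne'
      have : (-(2 * ε t ^ 2) / ε t ^ 2 + 2 * 1) = 0 := by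
        field_simp
        norm_num
      rw [this] at h1
      exact h1.hasDerivWithinAt
  have hFT := hF T' hmemT
  simp only [hε0, hεT, mul_zero, add_zero] at hFT
  -- hence T' = T
  have hμpos : 0 < μ := lt_of_lt_of_le h0 hμ
  have hTT : T' = (1 / 2) * (1 / εstar - 1 / μ) := by
    field_simp at hFT ⊢
    linarith
  -- the quantity a² / ε · exp(4t) is constant
  have hG : ∀ x ∈ Set.Icc 0 T',
      (fun t => a t ^ 2 * (ε t)⁻¹ * Real.exp (4 * t)) x
      = (fun t => a t ^ 2 * (ε t)⁻¹ * Real.exp (4 * t)) 0 := by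
    have key : ∀ t ∈ Set.Icc 0 T', HasDerivAt
        (fun t => a t ^ 2 * (ε t)⁻¹ * Real.exp (4 * t)) 0 t := by
      intro t ht
      have hexp : HasDerivAt (fun t : ℝ => Real.exp (4 * t)) (Real.exp (4 * t) * 4) t := by
        simpa using (((hasDerivAt_id t).const_mul 4).exp)
      have h1 : HasDerivAt (fun t => a t ^ 2 * (ε t)⁻¹ * Real.exp (4 * t))
          ((2 * a t ^ 1 * (-2 * a t + ε t * a t) * (ε t)⁻¹
            + a t ^ 2 * (-(2 * ε t ^ 2) / ε t ^ 2)) * Real.exp (4 * t)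
            + a t ^ 2 * (ε t)⁻¹ * (Real.exp (4 * t) * 4)) t :=
        (((ha t ht).pow 2).mul ((hε t ht).inv (hεpos t ht).ne')).mul hexp
      have heq : (2 * a t ^ 1 * (-2 * a t + ε t * a t) * (ε t)⁻¹
            + a t ^ 2 * (-(2 * ε t ^ 2) / ε t ^ 2)) * Real.exp (4 * t)
            + a t ^ 2 * (ε t)⁻¹ * (Real.exp (4 * t) * 4) = 0 := by
        have hne := (hεpos t ht).ne'
        field_simp
        ring
      rw [heq] at h1
      exact h1
    apply constant_of_has_deriv_right_zero
    · intro t ht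
      exact (key t ht).continuousAt.continuousWithinAt
    · intro t ht
      exact (key t (Set.Ico_subset_Icc_self ht)).hasDerivWithinAt
  have hGT := hG T' hmemT
  simp only [hε0, hεT, ha0, mul_zero, Real.exp_zero, mul_one] at hGT
  -- a(T')² = astar² · exp(-4T') · (μ/ε*)
  have hsq : a T' ^ 2 = (|astar| * Real.exp (-2 * T')) ^ 2 * (μ / εstar) := by
    have hexpne : Real.exp (4 * T') ≠ 0 := (Real.exp_pos _).ne'
    have e1 : a T' ^ 2
        = (a T' ^ 2 * μ⁻¹ * Real.exp (4 * T')) * μ * (Real.exp (4 * T'))⁻¹ := by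
      field_simp
    rw [hGT] at e1
    have hx : Real.exp (-2 * T') ^ 2 = (Real.exp (4 * T'))⁻¹ := by
      rw [sq, ← Real.exp_add, ← Real.exp_neg]
      ring_nf
    rw [mul_pow, sq_abs, hx, e1]
    ring
  have habs : |a T'| = |astar| * Real.exp (-2 * T') * Real.sqrt (μ / εstar) := by
    have h3 : (0:ℝ) ≤ |astar| * Real.exp (-2 * T') := by positivity
    have h4 : (0:ℝ) ≤ μ / εstar := by positivity
    rw [← Real.sqrt_sq_eq_abs, hsq, Real.sqrt_mul (by positivity), Real.sqrt_sq h3]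
  rw [habs, hTT]
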